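/- Let R be a ring and n ≥ 1. Suppose that for all f, g ∈ A_n supported on exponent vectors of total degree at most 1 (i.e. f and g are of the form c₀ + c₁x₁ + ⋯ + cₙxₙ), f * g = 0 implies f 0 * g m = 0 for every exponent vector m of total degree at most 1. Then R is Abelian: every idempotent of R is central. -/

import Mathlib

/-- If `R` satisfies the weak skew-Armendariz condition with respect to
`A_n = AddMonoidAlgebra R (Fin n →₀ ℕ)` (`n ≥ 1`), i.e. for all `f, g ∈ A_n` supported
on exponent vectors of total degree at most 1, `f * g = 0` implies `f 0 * g m = 0`
for every exponent vector `m` of total degree at most 1, then `R` is Abelian. -/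
theorem weak_nSkewArmendariz_abelian (R : Type*) [Ring R] (n : ℕ) (hn : 1 ≤ n)
    (hWSA : ∀ f g : AddMonoidAlgebra R (Fin n →₀ ℕ),
      (∀ m : Fin n →₀ ℕ, f.coeff m ≠ 0 → (m.sum fun _ k => k) ≤ 1) →
      (∀ m : Fin n →₀ ℕ, g.coeff m ≠ 0 → (m.sum fun _ k => k) ≤ 1) →
      f * g = 0 →
      ∀ m : Fin n →₀ ℕ, (m.sum fun _ k => k) ≤ 1 → f.coeff 0 * g.coeff m = 0) :
    ∀ e : R, e * e = e → ∀ r : R, e * r = r * e := by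
  intro e he r
  set i : Fin n := ⟨0, hn⟩ with hi
  set u : Fin n →₀ ℕ := Finsupp.single i 1 with hu
  have hu0 : u ≠ 0 := by
    simp [hu, Finsupp.single_eq_zero]
  have husum : (u.sum fun _ k => k) = 1 := by
    simp [hu, Finsupp.sum_single_index]
  have key : ∀ p q c d : R, p * q = 0 → p * d + c * q = 0 → c * d = 0 → p * d = 0 := by
    intro p q c d hpq hmid hcd
    set f : AddMonoidAlgebra R (Fin n →₀ ℕ) :=
      AddMonoidAlgebra.single 0 p + AddMonoidAlgebra.single u c with hf
    set g : AddMonoidAlgebra R (Fin n →₀ ℕ) :=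
      AddMonoidAlgebra.single 0 q + AddMonoidAlgebra.single u d with hg
    have hsupp : ∀ (x y : R) (m : Fin n →₀ ℕ),
        (AddMonoidAlgebra.single (0 : Fin n →₀ ℕ) x + AddMonoidAlgebra.single u y).coeff m ≠ 0 →
        (m.sum fun _ k => k) ≤ 1 := by
      intro x y m hm
      by_cases h0 : m = 0
      · subst h0; simp
      by_cases h1 : m = u
      · subst h1; rw [husum]
      · exfalso
        apply hm
        rw [AddMonoidAlgebra.coeff_add, AddMonoidAlgebra.coeff_single, AddMonoidAlgebra.coeff_single,
          Finsupp.add_apply, Finsupp.single_eq_of_ne h0,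
          Finsupp.single_eq_of_ne h1, add_zero]
    have hfg : f * g = 0 := by
      rw [hf, hg, add_mul, mul_add, mul_add, AddMonoidAlgebra.single_mul_single,
        AddMonoidAlgebra.single_mul_single, AddMonoidAlgebra.single_mul_single,
        AddMonoidAlgebra.single_mul_single, hpq, hcd, zero_add, add_zero]
      simp only [AddMonoidAlgebra.single_zero, zero_add, add_zero]
      rw [← AddMonoidAlgebra.single_add, hmid, AddMonoidAlgebra.single_zero]
    have h := hWSA f g (hsupp p c) (hsupp q d) hfg u (by rw [husum])
    rw [hf, hg] at h
    change (Finsupp.single 0 p + Finsupp.single u c : (Fin n →₀ ℕ) →₀ R) 0 *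
      (Finsupp.single 0 q + Finsupp.single u d : (Fin n →₀ ℕ) →₀ R) u = 0 at h
    simpa [Finsupp.single_apply, hu0, Ne.symm hu0] using h
  -- first: a := e*r - e*r*e is zero
  have ha1 : e * (e * r - e * r * e) = e * r - e * r * e := by
    rw [mul_sub, ← mul_assoc, he, ← mul_assoc, ← mul_assoc, he]
  have ha2 : (e * r - e * r * e) * e = 0 := by
    rw [sub_mul, mul_assoc (e * r) e e, he, sub_self]
  have haa : (e * r - e * r * e) * (e * r - e * r * e) = 0 := by
    calc (e * r - e * r * e) * (e * r - e * r * e)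
        = (e * r - e * r * e) * (e * (e * r - e * r * e)) := by rw [ha1]
      _ = ((e * r - e * r * e) * e) * (e * r - e * r * e) := by
            rw [mul_assoc (e * r - e * r * e) e (e * r - e * r * e)]
      _ = 0 := by rw [ha2, zero_mul]
  have h1 : e * r - e * r * e = 0 := by
    have h := key e (1 - e) (e * r - e * r * e) (-(e * r - e * r * e))
      (by rw [mul_sub, mul_one, he, sub_self])
      (by rw [mul_neg, ha1, mul_sub, mul_one, ha2, sub_zero, neg_add_cancel])
      (by rw [mul_neg, haa, neg_zero])
    rwa [mul_neg, ha1, neg_eq_zero] at h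
  -- second: b := r*e - e*r*e is zero
  have hb1 : (r * e - e * r * e) * e = r * e - e * r * e := by
    rw [sub_mul, mul_assoc r e e, he, mul_assoc (e * r) e e, he]
  have hb2 : e * (r * e - e * r * e) = 0 := by
    rw [mul_sub, ← mul_assoc e r e, ← mul_assoc, ← mul_assoc, he, sub_self]
  have hbb : (r * e - e * r * e) * (r * e - e * r * e) = 0 := by
    calc (r * e - e * r * e) * (r * e - e * r * e)
        = ((r * e - e * r * e) * e) * (r * e - e * r * e) := by rw [hb1]
      _ = (r * e - e * r * e) * (e * (r * e - e * r * e)) := by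
            rw [mul_assoc (r * e - e * r * e) e (r * e - e * r * e)]
      _ = 0 := by rw [hb2, mul_zero]
  have h2 : r * e - e * r * e = 0 := by
    have h := key (1 - e) e (r * e - e * r * e) (-(r * e - e * r * e))
      (by rw [sub_mul, one_mul, he, sub_self])
      (by rw [mul_neg, sub_mul, one_mul, hb2, sub_zero, hb1, neg_add_cancel])
      (by rw [mul_neg, hbb, neg_zero])
    rwa [mul_neg, sub_mul, one_mul, hb2, sub_zero, neg_eq_zero] at h
  rw [sub_eq_zero] at h1 h2
  rw [h1, h2]
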